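/- Let n ≥ d ≥ 1 and n > 1. If τ₁, …, τₙ are unit vectors in ℂ^d, then for every natural number m ≥ 1, the maximum over pairs j ≠ k of |⟨τⱼ, τₖ⟩|^{2m} is at least (1/(n-1)) · ( n / C(d+m-1, m) − 1 ). -/

import Mathlib

open Finset Matrix

private lemma welch_trace_aux {ι : Type*} [Fintype ι] (A : Matrix ι ι ℂ)
    (hA : A.IsHermitian) :
    (A * A).trace = ∑ k, ∑ t, (Complex.normSq (A k t) : ℂ) := by
  rw [Matrix.trace]
  refine Finset.sum_congr rfl fun k _ => ?_
  rw [Matrix.diag_apply, Matrix.mul_apply]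
  refine Finset.sum_congr rfl fun t _ => ?_
  have h1 : A t k = (starRingEnd ℂ) (A k t) := by
    conv_lhs => rw [← hA]
    rfl
  rw [h1, Complex.mul_conj]

private lemma welch_main (d n m : ℕ) (hd : 1 ≤ d) (hn : 1 < n) (hm : 1 ≤ m)
    (τ : Fin n → EuclideanSpace ℂ (Fin d)) (hτ : ∀ j, ‖τ j‖ = 1) (B : ℝ)
    (hB : ∀ p ∈ (Finset.univ : Finset (Fin n)).offDiag,
      ‖(inner ℂ (τ p.1) (τ p.2) : ℂ)‖ ^ (2 * m) ≤ B) :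
    (1 / ((n : ℝ) - 1)) * ((n : ℝ) / ((d + m - 1).choose m : ℝ) - 1) ≤ B := by
  classical
  set D : ℕ := (d + m - 1).choose m with hDdef
  -- weighted symmetric power vectors
  set u : Fin n → Sym (Fin d) m → ℂ := fun j k =>
    (Real.sqrt (k.val.countPerms) : ℂ) *
      (k.val.map (τ j)).prod with hu
  have hsqrt : ∀ k : Sym (Fin d) m,
      ((Real.sqrt (k.val.countPerms) : ℝ) : ℂ) *
        ((Real.sqrt (k.val.countPerms) : ℝ) : ℂ)
        = ((k.val.countPerms : ℕ) : ℂ) := by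
    intro k
    rw [← Complex.ofReal_mul, Real.mul_self_sqrt (by positivity)]
    norm_num
  -- inner product identity via the multinomial theorem
  have hinner : ∀ j j' : Fin n,
      (inner ℂ (τ j) (τ j') : ℂ) ^ m = ∑ k : Sym (Fin d) m, (starRingEnd ℂ) (u j k) * u j' k := by
    intro j j'
    have h1 : (inner ℂ (τ j) (τ j') : ℂ) = ∑ i, (starRingEnd ℂ) (τ j i) * τ j' i := by
      simp [PiLp.inner_apply, RCLike.inner_apply, mul_comm]
    rw [h1, Finset.sum_pow, Finset.sym_univ]
    refine Finset.sum_congr rfl fun k _ => ?_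
    have hconjprod : (Multiset.map (fun i => (starRingEnd ℂ) (τ j i)) k.val).prod
        = (starRingEnd ℂ) ((Multiset.map (τ j) k.val).prod) := by
      rw [map_multiset_prod, Multiset.map_map]; rfl
    simp only [hu, _root_.map_mul, Complex.conj_ofReal]
    rw [Multiset.prod_map_mul, hconjprod, ← hsqrt k]
    ring
  have hselfinner : ∀ j, (inner ℂ (τ j) (τ j) : ℂ) = 1 := by
    intro j
    rw [inner_self_eq_norm_sq_to_K, hτ j]
    norm_num
  -- diagonal normalization
  have hC : ∀ j, ∑ k : Sym (Fin d) m, Complex.normSq (u j k) = 1 := by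
    intro j
    have h1 := hinner j j
    rw [hselfinner j, one_pow] at h1
    have h3 : (1 : ℂ) = ((∑ k : Sym (Fin d) m, Complex.normSq (u j k) : ℝ) : ℂ) := by
      rw [h1]
      push_cast
      refine Finset.sum_congr rfl fun k _ => ?_
      rw [mul_comm, Complex.mul_conj]
    exact_mod_cast h3.symm
  -- matrices
  set W : Matrix (Sym (Fin d) m) (Fin n) ℂ := Matrix.of (fun k j => u j k) with hW
  have hB' : ∀ j j', (Wᴴ * W) j j' = ∑ k, (starRingEnd ℂ) (u j k) * u j' k := by
    intro j j'
    simp [Matrix.mul_apply, Matrix.conjTranspose_apply, hW]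
  have hA' : ∀ k t, (W * Wᴴ) k t = ∑ j, u j k * (starRingEnd ℂ) (u j t) := by
    intro k t
    simp [Matrix.mul_apply, Matrix.conjTranspose_apply, hW]
  -- trace identity
  have htr : ∑ k, ∑ t, Complex.normSq ((W * Wᴴ) k t)
      = ∑ j, ∑ j', Complex.normSq ((Wᴴ * W) j j') := by
    have e1 := welch_trace_aux (W * Wᴴ) (Matrix.isHermitian_mul_conjTranspose_self W)
    have e2 := welch_trace_aux (Wᴴ * W) (Matrix.isHermitian_conjTranspose_mul_self W)
    have e3 : ((W * Wᴴ) * (W * Wᴴ)).trace = ((Wᴴ * W) * (Wᴴ * W)).trace := by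
      rw [Matrix.mul_assoc, ← Matrix.mul_assoc Wᴴ W Wᴴ, Matrix.trace_mul_comm,
        Matrix.mul_assoc]
    rw [e1, e2] at e3
    have e4 : ((∑ k, ∑ t, Complex.normSq ((W * Wᴴ) k t) : ℝ) : ℂ)
        = ((∑ j, ∑ j', Complex.normSq ((Wᴴ * W) j j') : ℝ) : ℂ) := by
      push_cast
      exact e3
    exact_mod_cast e4
  -- diagonal of W * Wᴴ
  have hAkk : ∀ k, (W * Wᴴ) k k = ((∑ j, Complex.normSq (u j k) : ℝ) : ℂ) := by
    intro k
    rw [hA' k k]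
    push_cast
    exact Finset.sum_congr rfl fun j _ => Complex.mul_conj _
  have hdiag_le : ∀ k : Sym (Fin d) m,
      (∑ j, Complex.normSq (u j k)) ^ 2 ≤ ∑ t, Complex.normSq ((W * Wᴴ) k t) := by
    intro k
    have h1 : Complex.normSq ((W * Wᴴ) k k) = (∑ j, Complex.normSq (u j k)) ^ 2 := by
      rw [hAkk k, Complex.normSq_ofReal, sq]
    calc (∑ j, Complex.normSq (u j k)) ^ 2 = Complex.normSq ((W * Wᴴ) k k) := h1.symm
      _ ≤ ∑ t, Complex.normSq ((W * Wᴴ) k t) :=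
        Finset.single_le_sum (fun t _ => Complex.normSq_nonneg _) (Finset.mem_univ k)
  have hcard : Fintype.card (Sym (Fin d) m) = D := by
    rw [Sym.card_sym_eq_choose, Fintype.card_fin]
  have hsum1 : ∑ k : Sym (Fin d) m, (∑ j, Complex.normSq (u j k)) = n := by
    rw [Finset.sum_comm]
    simp [hC]
  -- Cauchy–Schwarz
  have hCS : (n : ℝ) ^ 2 ≤ (D : ℝ) * ∑ k : Sym (Fin d) m, (∑ j, Complex.normSq (u j k)) ^ 2 := by
    have h := sq_sum_le_card_mul_sum_sq (s := (univ : Finset (Sym (Fin d) m)))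
      (f := fun k => ∑ j, Complex.normSq (u j k))
    rw [hsum1, Finset.card_univ, hcard] at h
    exact h
  have hDpos : 0 < D := Nat.choose_pos (by omega)
  have hD0 : (0 : ℝ) < (D : ℝ) := by exact_mod_cast hDpos
  -- assemble
  have hnormSq : ∀ j j', Complex.normSq ((Wᴴ * W) j j')
      = ‖(inner ℂ (τ j) (τ j') : ℂ)‖ ^ (2 * m) := by
    intro j j'
    rw [hB' j j', ← hinner j j', Complex.normSq_eq_norm_sq, norm_pow,
      ← pow_mul, mul_comm m 2]
  have hfinal : (n : ℝ) ^ 2 ≤ (D : ℝ) * ∑ j, ∑ j', ‖(inner ℂ (τ j) (τ j') : ℂ)‖ ^ (2 * m) := by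
    refine hCS.trans ?_
    have h1 : ∑ k : Sym (Fin d) m, (∑ j, Complex.normSq (u j k)) ^ 2
        ≤ ∑ j, ∑ j', ‖(inner ℂ (τ j) (τ j') : ℂ)‖ ^ (2 * m) := by
      calc ∑ k : Sym (Fin d) m, (∑ j, Complex.normSq (u j k)) ^ 2
          ≤ ∑ k, ∑ t, Complex.normSq ((W * Wᴴ) k t) :=
            Finset.sum_le_sum fun k _ => hdiag_le k
        _ = ∑ j, ∑ j', Complex.normSq ((Wᴴ * W) j j') := htr
        _ = ∑ j, ∑ j', ‖(inner ℂ (τ j) (τ j') : ℂ)‖ ^ (2 * m) := by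
            exact Finset.sum_congr rfl fun j _ => Finset.sum_congr rfl fun j' _ => hnormSq j j'
    exact mul_le_mul_of_nonneg_left h1 hD0.le
  -- split the double sum into the diagonal and off-diagonal parts
  have hsplit : ∑ j, ∑ j', ‖(inner ℂ (τ j) (τ j') : ℂ)‖ ^ (2 * m)
      = (n : ℝ) + ∑ p ∈ (univ : Finset (Fin n)).offDiag,
          ‖(inner ℂ (τ p.1) (τ p.2) : ℂ)‖ ^ (2 * m) := by
    have h0 : ∑ j, ∑ j', ‖(inner ℂ (τ j) (τ j') : ℂ)‖ ^ (2 * m)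
        = ∑ p ∈ (univ : Finset (Fin n)) ×ˢ (univ : Finset (Fin n)),
            ‖(inner ℂ (τ p.1) (τ p.2) : ℂ)‖ ^ (2 * m) := by
      rw [Finset.sum_product]
    rw [h0, ← Finset.diag_union_offDiag,
      Finset.sum_union (Finset.disjoint_diag_offDiag _), Finset.sum_diag]
    congr 1
    have : ∀ j : Fin n, ‖(inner ℂ (τ j) (τ j) : ℂ)‖ ^ (2 * m) = 1 := by
      intro j
      rw [hselfinner j]
      simp
    simp only [this]
    simp
  have hoff : ∑ p ∈ (univ : Finset (Fin n)).offDiag,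
      ‖(inner ℂ (τ p.1) (τ p.2) : ℂ)‖ ^ (2 * m) ≤ ((n * n - n : ℕ) : ℝ) * B := by
    have h := Finset.sum_le_card_nsmul ((univ : Finset (Fin n)).offDiag)
      (fun p => ‖(inner ℂ (τ p.1) (τ p.2) : ℂ)‖ ^ (2 * m)) B hB
    rw [Finset.offDiag_card, Finset.card_univ, Fintype.card_fin] at h
    simpa [nsmul_eq_mul] using h
  have hcast : ((n * n - n : ℕ) : ℝ) = (n : ℝ) * (n : ℝ) - (n : ℝ) := by
    have : n ≤ n * n := Nat.le_mul_of_pos_left n (by omega)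
    push_cast [this]
    ring
  have hn' : (1 : ℝ) < (n : ℝ) := by exact_mod_cast hn
  have hmain : (n : ℝ) ^ 2 ≤ (D : ℝ) * ((n : ℝ) + ((n : ℝ) * (n : ℝ) - (n : ℝ)) * B) := by
    calc (n : ℝ) ^ 2 ≤ (D : ℝ) * ∑ j, ∑ j', ‖(inner ℂ (τ j) (τ j') : ℂ)‖ ^ (2 * m) := hfinal
      _ ≤ (D : ℝ) * ((n : ℝ) + ((n : ℝ) * (n : ℝ) - (n : ℝ)) * B) := by
          rw [hsplit]
          have := hoff
          rw [hcast] at this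
          nlinarith [hD0]
  -- final arithmetic
  rw [one_div, inv_mul_le_iff₀ (by linarith : (0 : ℝ) < (n : ℝ) - 1)]
  have hstep : (n : ℝ) / (D : ℝ) ≤ 1 + ((n : ℝ) - 1) * B := by
    rw [div_le_iff₀ hD0]
    have h2 : (n : ℝ) * (n : ℝ) ≤ (n : ℝ) * ((1 + ((n : ℝ) - 1) * B) * (D : ℝ)) := by
      nlinarith [hmain]
    exact le_of_mul_le_mul_left h2 (by linarith)
  nlinarith [hstep]

/-- **Higher order Welch bound.** For `n ≥ d ≥ 1`, `n > 1`, unit vectors `τ₁,…,τₙ` in `ℂ^d`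
and `m ≥ 1`, `max_{j≠k} |⟨τⱼ,τₖ⟩|^(2m) ≥ (1/(n-1)) (n / C(d+m-1,m) − 1)`. -/
theorem higher_order_welch_bound (d n : ℕ) (hd : 1 ≤ d) (hdn : d ≤ n) (hn : 1 < n)
    (τ : Fin n → EuclideanSpace ℂ (Fin d)) (hτ : ∀ j, ‖τ j‖ = 1)
    (m : ℕ) (hm : 1 ≤ m) :
    (1 / ((n : ℝ) - 1)) * ((n : ℝ) / ((d + m - 1).choose m : ℝ) - 1) ≤
      (Finset.univ.offDiag.sup'
        ⟨(⟨0, by omega⟩, ⟨1, by omega⟩), by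
          simp [Finset.mem_offDiag, Fin.ext_iff]⟩
        fun p => ‖(inner ℂ (τ p.1) (τ p.2) : ℂ)‖ ^ (2 * m)) := by
  exact welch_main d n m hd hn hm τ hτ _ fun p hp => Finset.le_sup' (fun p : Fin n × Fin n => ‖(inner ℂ (τ p.1) (τ p.2) : ℂ)‖ ^ (2 * m)) hp
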